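/- Let 𝔤 = sl₂ over a field 𝕂 of characteristic zero with standard basis H, u⁺, u⁻, let 𝔟 be the Borel spanned by H and u⁺, and let k ∈ 𝕂 be such that k - n ∈ 𝕂^× for every integer n (k is not an integer). Fix N ≥ 0 and consider the map Ξ_N: 𝕂[u⁻] ⊗ V_{N+1} ⊗ 𝔲⁻ → 𝕂[u⁻] ⊗ V_N defined on basis elements by Ξ_N(P(u⁻) ⊗ e_{N+1,i} ⊗ u⁻) = u⁻P(u⁻) ⊗ e_{N,i} + (k-i)P(u⁻) ⊗ e_{N,i-1} (with e_{N,N+1} = e_{N,-1} = 0), where V_M is the 𝕂-vector space with basis e_{M,0},…,e_{M,M}. Then Ξ_N is surjective. -/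

import Mathlib

open Polynomial

/-- Surjectivity of the dual-Koszul differential `Ξ_N` for `sl₂` and a non-integral
weight `k`: under the PBW identification, `Ξ_N` sends `(P_i)_{0≤i≤N+1}` to the family
`(X·P_j + (k-j-1)·P_{j+1})_{0≤j≤N}`, and this map is surjective. -/
theorem stmt12 {𝕂 : Type*} [Field 𝕂] [CharZero 𝕂] (k : 𝕂)
    (hk : ∀ n : ℤ, k - n ≠ 0) (N : ℕ) :
    Function.Surjective (fun (P : Fin (N + 2) → Polynomial 𝕂) =>
      fun (j : Fin (N + 1)) =>
        X * P j.castSucc + C (k - (((j : ℕ) + 1 : ℕ) : 𝕂)) * P j.succ) := by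
  classical
  intro Q
  set Qe : ℕ → Polynomial 𝕂 := fun j => if h : j < N + 1 then Q ⟨j, h⟩ else 0 with hQe
  set f : ℕ → Polynomial 𝕂 := fun n =>
    Nat.rec 0 (fun j p => C (k - ((j + 1 : ℕ) : 𝕂))⁻¹ * (Qe j - X * p)) n with hfdef
  refine ⟨fun i => f i, ?_⟩
  funext j
  have hne : (k - (((j : ℕ) + 1 : ℕ) : 𝕂)) ≠ 0 := by
    have := hk ((j : ℕ) + 1)
    push_cast at this ⊢
    exact this
  have hf : f ((j : ℕ) + 1) = C (k - (((j : ℕ) + 1 : ℕ) : 𝕂))⁻¹ * (Qe j - X * f j) := rfl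
  simp only [Fin.coe_castSucc, Fin.val_succ]
  rw [hf, ← mul_assoc, ← C_mul, mul_inv_cancel₀ hne, C_1, one_mul]
  have : Qe (j : ℕ) = Q j := by
    simp [hQe, j.isLt]
    intro h
    exact absurd h (by have := j.isLt; omega)
  rw [this]
  ring
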